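/- A nonzero pair (λ, μ) ∈ 𝒦 spans an extremal ray of the Kostka cone 𝒦 if and only if there exist an index j, a positive rational c, and an extreme point μ_0 of the intersection polytope IP_{ϖ_j}, such that λ = c·ϖ_j and μ = c·μ_0. -/

import Mathlib

section Form
variable {V : Type*} [AddCommGroup V] [Module ℚ V] {r : ℕ}

theorem exists_goodForm (b : Module.Basis (Fin r) ℚ V) (coroot : Fin r → Module.Dual ℚ V)
    (hdiag : ∀ i, coroot i (b i) = 2)
    (Φ : Set V) (hΦfin : Φ.Finite) (hΦroot : ∀ i, b i ∈ Φ)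
    (hΦrefl : ∀ β ∈ Φ, ∀ i, β - coroot i β • b i ∈ Φ) :
    ∃ B : V →ₗ[ℚ] V →ₗ[ℚ] ℚ,
      (∀ v, v ≠ 0 → 0 < B v v) ∧ (∀ v w, B v w = B w v) ∧
      (∀ i v, coroot i v * B (b i) (b i) = 2 * B v (b i)) := by
  classical
  set σl : Fin r → (V →ₗ[ℚ] V) := fun i => LinearMap.id - (coroot i).smulRight (b i) with hσl
  have hσapp : ∀ i v, σl i v = v - coroot i v • b i := by
    intro i v
    simp [hσl, LinearMap.sub_apply, LinearMap.smulRight_apply]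
  have hσΦ : ∀ i, ∀ β ∈ Φ, σl i β ∈ Φ := by
    intro i β hβ
    rw [hσapp]
    exact hΦrefl β hβ i
  have hσσ : ∀ i, (σl i).comp (σl i) = LinearMap.id := by
    intro i
    apply LinearMap.ext
    intro v
    simp only [LinearMap.comp_apply, LinearMap.id_apply, hσapp, map_sub, map_smul, hdiag,
      smul_eq_mul]
    module
  have hWfin : {g : V →ₗ[ℚ] V | ∀ v ∈ Φ, g v ∈ Φ}.Finite := by
    have hinj : Function.Injective (fun g : V →ₗ[ℚ] V => fun i => g (b i)) := by
      intro g g' h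
      exact b.ext fun i => congrFun h i
    have hpi : (Set.pi Set.univ (fun _ : Fin r => Φ)).Finite := Set.Finite.pi fun _ => hΦfin
    apply Set.Finite.subset (hpi.preimage hinj.injOn)
    intro g hg
    simp only [Set.mem_preimage, Set.mem_pi, Set.mem_univ, forall_true_left]
    exact fun i => hg (b i) (hΦroot i)
  set F : Finset (V →ₗ[ℚ] V) := hWfin.toFinset with hF
  have hmemF : ∀ g : V →ₗ[ℚ] V, g ∈ F ↔ ∀ v ∈ Φ, g v ∈ Φ := by
    intro g; rw [hF, Set.Finite.mem_toFinset]; rfl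
  set B0 : V →ₗ[ℚ] V →ₗ[ℚ] ℚ := ∑ i : Fin r, (b.coord i).smulRight (b.coord i) with hB0
  have hB0app : ∀ v w, B0 v w = ∑ i : Fin r, b.coord i v * b.coord i w := by
    intro v w
    rw [hB0]
    simp [LinearMap.sum_apply, LinearMap.smulRight_apply, smul_eq_mul]
  set B : V →ₗ[ℚ] V →ₗ[ℚ] ℚ := ∑ g ∈ F, (B0.compl₁₂ g g) with hB
  have hBapp : ∀ v w, B v w = ∑ g ∈ F, B0 (g v) (g w) := by
    intro v w
    rw [hB]
    simp [LinearMap.sum_apply, LinearMap.compl₁₂_apply]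
  have hIdF : LinearMap.id ∈ F := by
    rw [hmemF]
    intro v hv
    exact hv
  have hPD : ∀ v, v ≠ 0 → 0 < B v v := by
    intro v hv
    rw [hBapp]
    refine Finset.sum_pos' (fun g _ => ?_) ⟨LinearMap.id, hIdF, ?_⟩
    · rw [hB0app]
      exact Finset.sum_nonneg fun i _ => mul_self_nonneg _
    · simp only [LinearMap.id_apply]
      rw [hB0app]
      obtain ⟨i, hi⟩ : ∃ i, b.coord i v ≠ 0 := by
        by_contra h
        push_neg at h
        exact hv (b.forall_coord_eq_zero_iff.mp h)
      refine Finset.sum_pos' (fun i _ => mul_self_nonneg _) ⟨i, Finset.mem_univ i, ?_⟩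
      exact mul_self_pos.mpr hi
  have hInv : ∀ (i : Fin r) v w, B (σl i v) (σl i w) = B v w := by
    intro i v w
    rw [hBapp, hBapp]
    have hcomp : ∀ g : V →ₗ[ℚ] V, g ∈ F → g.comp (σl i) ∈ F := by
      intro g hg
      rw [hmemF] at hg ⊢
      intro v hv
      exact hg _ (hσΦ i v hv)
    have hinj2 : Function.Injective (fun g : V →ₗ[ℚ] V => g.comp (σl i)) := by
      intro g g' h
      have := congrArg (fun h : V →ₗ[ℚ] V => h.comp (σl i)) h
      simpa [LinearMap.comp_assoc, hσσ i] using this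
    have himg : F.image (fun g : V →ₗ[ℚ] V => g.comp (σl i)) = F := by
      apply Finset.eq_of_subset_of_card_le
      · intro g hg
        obtain ⟨g', hg', rfl⟩ := Finset.mem_image.mp hg
        exact hcomp g' hg'
      · rw [Finset.card_image_of_injective _ hinj2]
    calc ∑ g ∈ F, B0 (g (σl i v)) (g (σl i w))
        = ∑ g ∈ F, B0 ((g.comp (σl i)) v) ((g.comp (σl i)) w) := by
          simp [LinearMap.comp_apply]
      _ = ∑ g ∈ F.image (fun g : V →ₗ[ℚ] V => g.comp (σl i)), B0 (g v) (g w) := by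
          rw [Finset.sum_image (fun g _ g' _ h => hinj2 h)]
      _ = ∑ g ∈ F, B0 (g v) (g w) := by rw [himg]
  have hBsymm : ∀ v w, B v w = B w v := by
    intro v w
    rw [hBapp, hBapp]
    apply Finset.sum_congr rfl
    intro g _
    rw [hB0app, hB0app]
    apply Finset.sum_congr rfl
    intro i _
    ring
  refine ⟨B, hPD, hBsymm, ?_⟩
  intro i v
  have h1 := hInv i v (b i)
  have h2 : σl i (b i) = -(b i) := by
    rw [hσapp, hdiag]
    module
  rw [hσapp, h2] at h1
  simp only [map_sub, map_smul, map_neg, LinearMap.sub_apply, LinearMap.smul_apply,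
    LinearMap.neg_apply, smul_eq_mul] at h1
  linarith
end Form


theorem cast_mulVec {r : ℕ} (M : Matrix (Fin r) (Fin r) ℚ) (u : Fin r → ℚ) :
    (M.map (fun a : ℚ => (a : ℝ))).mulVec (fun i => (u i : ℝ)) = fun j => ((M.mulVec u j : ℚ) : ℝ) := by
  funext j
  simp only [Matrix.mulVec, dotProduct, Matrix.map_apply]
  push_cast
  rfl

theorem matrix_split {r : ℕ} (N : Matrix (Fin r) (Fin r) ℚ)
    (hdiagN : ∀ j, N j j = 2)
    (hoffN : ∀ i j : Fin r, i ≠ j → N j i ≤ 0)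
    (hPD : ∀ u : Fin r → ℚ, (∀ j, u j = 0 ∨ N.mulVec u j = 0) → u = 0)
    (x y c : Fin r → ℚ) (hx : ∀ j, 0 ≤ x j) (hy : ∀ j, 0 ≤ y j) (hc : ∀ i, 0 ≤ c i)
    (hcxy : ∀ j, N.mulVec c j ≤ x j + y j) :
    ∃ d : Fin r → ℚ, (∀ i, 0 ≤ d i) ∧ (∀ i, d i ≤ c i) ∧
      (∀ j, N.mulVec d j ≤ x j) ∧ (∀ j, N.mulVec (c - d) j ≤ y j) := by
  classical
  set NR : Matrix (Fin r) (Fin r) ℝ := N.map (fun a : ℚ => (a : ℝ)) with hNRdef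
  set S : Set (Fin r → ℝ) :=
    {d | (∀ i, 0 ≤ d i) ∧ (∀ i, d i ≤ (c i : ℝ)) ∧ (∀ j, NR.mulVec d j ≤ (x j : ℝ))} with hSdef
  have hmvcont : ∀ j, Continuous fun d : Fin r → ℝ => NR.mulVec d j := by
    intro j
    show Continuous fun d : Fin r → ℝ => ∑ i, NR j i * d i
    exact continuous_finset_sum _ fun i _ => continuous_const.mul (continuous_apply i)
  have hSeq : S = Set.Icc (0 : Fin r → ℝ) (fun i => (c i : ℝ)) ∩
      ⋂ j, {d | NR.mulVec d j ≤ (x j : ℝ)} := by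
    ext d
    simp only [hSdef, Set.mem_setOf_eq, Set.mem_inter_iff, Set.mem_Icc, Set.mem_iInter,
      Pi.le_def, Pi.zero_apply]
    tauto
  have hScompact : IsCompact S := by
    rw [hSeq]
    exact isCompact_Icc.inter_right
      (isClosed_iInter fun j => isClosed_le (hmvcont j) continuous_const)
  have h0S : (0 : Fin r → ℝ) ∈ S := by
    refine ⟨fun i => le_refl _, fun i => by simpa using (Rat.cast_nonneg (K := ℝ)).mpr (hc i), fun j => ?_⟩
    rw [Matrix.mulVec_zero]
    simpa using (Rat.cast_nonneg (K := ℝ)).mpr (hx j)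
  have hfcont : Continuous fun d : Fin r → ℝ => ∑ j, d j :=
    continuous_finset_sum _ fun j _ => continuous_apply j
  obtain ⟨dm, hdmS, hmax'⟩ := hScompact.exists_isMaxOn ⟨0, h0S⟩ hfcont.continuousOn
  have hmax : ∀ d ∈ S, (∑ k, d k) ≤ ∑ k, dm k := fun d hd => hmax' hd
  have hsingle : ∀ (j : Fin r) (ε : ℝ) (k : Fin r),
      NR.mulVec (Pi.single j ε) k = NR k j * ε := by
    intro j ε k
    exact congrFun (Matrix.mulVec_single NR j ε) k
  have hdisj : ∀ j, dm j = (c j : ℝ) ∨ NR.mulVec dm j = (x j : ℝ) := by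
    intro j
    by_contra hcon
    push_neg at hcon
    obtain ⟨h1, h2⟩ := hcon
    have h1' : dm j < (c j : ℝ) := lt_of_le_of_ne (hdmS.2.1 j) h1
    have h2' : NR.mulVec dm j < (x j : ℝ) := lt_of_le_of_ne (hdmS.2.2 j) h2
    set ε := min ((c j : ℝ) - dm j) (((x j : ℝ) - NR.mulVec dm j) / 2) with hε
    have hεpos : 0 < ε := lt_min (by linarith) (by linarith)
    have hε1 : ε ≤ (c j : ℝ) - dm j := min_le_left _ _
    have hε2 : ε ≤ ((x j : ℝ) - NR.mulVec dm j) / 2 := min_le_right _ _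
    set d' : Fin r → ℝ := dm + Pi.single j ε with hd'
    have hd'S : d' ∈ S := by
      refine ⟨fun i => ?_, fun i => ?_, fun k => ?_⟩
      · rcases eq_or_ne i j with rfl | hij
        · simp only [hd', Pi.add_apply, Pi.single_eq_same]
          have := hdmS.1 i
          linarith
        · simp only [hd', Pi.add_apply, Pi.single_eq_of_ne hij]
          have := hdmS.1 i
          linarith
      · rcases eq_or_ne i j with rfl | hij
        · simp only [hd', Pi.add_apply, Pi.single_eq_same]
          linarith
        · simp only [hd', Pi.add_apply, Pi.single_eq_of_ne hij, add_zero]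
          exact hdmS.2.1 i
      · rw [hd', Matrix.mulVec_add, Pi.add_apply, hsingle]
        rcases eq_or_ne k j with rfl | hkj
        · have : NR k k = (2 : ℝ) := by
            rw [hNRdef, Matrix.map_apply, hdiagN]
            norm_num
          rw [this]
          linarith
        · have hle : NR k j ≤ 0 := by
            rw [hNRdef, Matrix.map_apply]
            exact_mod_cast hoffN j k (Ne.symm hkj)
          have : NR k j * ε ≤ 0 := mul_nonpos_of_nonpos_of_nonneg hle hεpos.le
          have := hdmS.2.2 k
          linarith
    have hle := hmax d' hd'S
    have hfd' : ∑ k, d' k = (∑ k, dm k) + ε := by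
      rw [hd']
      simp only [Pi.add_apply]
      rw [Finset.sum_add_distrib]
      congr 1
      simp
    rw [hfd'] at hle
    linarith
  -- rationality
  set P : Matrix (Fin r) (Fin r) ℚ :=
    fun j i => if NR.mulVec dm j = (x j : ℝ) then N j i else (if i = j then 1 else 0) with hPdef
  have hPinj : ∀ u : Fin r → ℚ, P.mulVec u = 0 → u = 0 := by
    intro u hu
    apply hPD
    intro j
    have hj := congrFun hu j
    rw [Pi.zero_apply] at hj
    by_cases hcond : NR.mulVec dm j = (x j : ℝ)
    · right
      rw [← hj]
      simp only [Matrix.mulVec, dotProduct]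
      refine Finset.sum_congr rfl fun i _ => ?_
      rw [hPdef]
      simp [hcond]
    · left
      rw [← hj]
      simp only [Matrix.mulVec, dotProduct]
      rw [Finset.sum_eq_single j]
      · rw [hPdef]
        simp [hcond]
      · intro i _ hi
        rw [hPdef]
        simp [hcond, hi]
      · intro h
        exact absurd (Finset.mem_univ j) h
  have hdet : P.det ≠ 0 := by
    intro h
    obtain ⟨u, hu0, huv⟩ := (Matrix.exists_mulVec_eq_zero_iff).mpr h
    exact hu0 (hPinj u huv)
  set PR : Matrix (Fin r) (Fin r) ℝ := P.map (fun a : ℚ => (a : ℝ)) with hPRdef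
  have hdetR : PR.det ≠ 0 := by
    have : PR.det = ((P.det : ℚ) : ℝ) := by
      have h1 : PR = (Rat.castHom ℝ).mapMatrix P := by
        rw [RingHom.mapMatrix_apply]
        rfl
      rw [h1, ← RingHom.map_det]
      rfl
    rw [this]
    exact_mod_cast hdet
  have hPRinj : ∀ u v : Fin r → ℝ, PR.mulVec u = PR.mulVec v → u = v := by
    intro u v huv
    by_contra hne
    have hsub : PR.mulVec (u - v) = 0 := by
      rw [Matrix.mulVec_sub, huv, sub_self]
    exact hdetR (Matrix.exists_mulVec_eq_zero_iff.mp ⟨u - v, sub_ne_zero.mpr hne, hsub⟩)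
  set vq : Fin r → ℚ := fun j => if NR.mulVec dm j = (x j : ℝ) then x j else c j with hvqdef
  have hPRdm : PR.mulVec dm = fun j => ((vq j : ℚ) : ℝ) := by
    funext j
    by_cases hcond : NR.mulVec dm j = (x j : ℝ)
    · have : PR.mulVec dm j = NR.mulVec dm j := by
        simp only [Matrix.mulVec, dotProduct]
        refine Finset.sum_congr rfl fun i _ => ?_
        rw [hPRdef, Matrix.map_apply, hPdef, hNRdef]
        simp [hcond, ← hNRdef]
      rw [this, hcond, hvqdef]
      simp [hcond]
    · have : PR.mulVec dm j = dm j := by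
        simp only [Matrix.mulVec, dotProduct]
        rw [Finset.sum_eq_single j]
        · rw [hPRdef, Matrix.map_apply, hPdef]
          simp [hcond]
        · intro i _ hi
          rw [hPRdef, Matrix.map_apply, hPdef]
          simp [hcond, hi]
        · intro h
          exact absurd (Finset.mem_univ j) h
      rw [this]
      rcases hdisj j with h | h
      · rw [h, hvqdef]
        simp [hcond]
      · exact absurd h hcond
  set dq : Fin r → ℚ := P⁻¹.mulVec vq with hdqdef
  have hPdq : P.mulVec dq = vq := by
    rw [hdqdef, Matrix.mulVec_mulVec, Matrix.mul_nonsing_inv _ (isUnit_iff_ne_zero.mpr hdet),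
      Matrix.one_mulVec]
  have hdmeq : dm = fun i => ((dq i : ℚ) : ℝ) := by
    apply hPRinj
    rw [hPRdm]
    rw [hPRdef, cast_mulVec P dq, hPdq]
  have hpt : ∀ i, dm i = ((dq i : ℚ) : ℝ) := by
    intro i
    rw [hdmeq]
  have hmveq : ∀ j, NR.mulVec dm j = ((N.mulVec dq j : ℚ) : ℝ) := by
    intro j
    rw [hdmeq, hNRdef, cast_mulVec N dq]
  have hdq0 : ∀ i, 0 ≤ dq i := by
    intro i
    have := hdmS.1 i
    rw [hpt i] at this
    exact_mod_cast this
  have hdqc : ∀ i, dq i ≤ c i := by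
    intro i
    have := hdmS.2.1 i
    rw [hpt i] at this
    exact_mod_cast this
  have hNdx : ∀ j, N.mulVec dq j ≤ x j := by
    intro j
    have := hdmS.2.2 j
    rw [hmveq j] at this
    exact_mod_cast this
  have hdisjq : ∀ j, dq j = c j ∨ N.mulVec dq j = x j := by
    intro j
    rcases hdisj j with h | h
    · left
      rw [hpt j] at h
      exact_mod_cast h
    · right
      rw [hmveq j] at h
      exact_mod_cast h
  refine ⟨dq, hdq0, hdqc, hNdx, ?_⟩
  intro j
  rcases hdisjq j with h | h
  · have : N.mulVec (c - dq) j ≤ 0 := by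
      show (∑ i, N j i * (c - dq) i) ≤ 0
      apply Finset.sum_nonpos
      intro i _
      rcases eq_or_ne i j with rfl | hij
      · rw [Pi.sub_apply, h]
        simp
      · exact mul_nonpos_of_nonpos_of_nonneg (hoffN i j hij)
          (by rw [Pi.sub_apply]; linarith [hdqc i])
    linarith [hy j]
  · rw [Matrix.mulVec_sub, Pi.sub_apply, h]
    linarith [hcxy j]

/-- The intersection polytope `IP_lam`: the set of dominant weights `μ` such that
`lam - μ` is a nonnegative rational combination of the simple roots. -/
def IP {V : Type*} [AddCommGroup V] [Module ℚ V] {r : ℕ}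
    (b : Fin r → V) (coroot : Fin r → Module.Dual ℚ V) (lam : V) : Set V :=
  {μ | (∀ i, 0 ≤ coroot i μ) ∧
    ∃ c : Fin r → ℚ, (∀ i, 0 ≤ c i) ∧ lam - μ = ∑ i, c i • b i}

/-- The Kostka cone `𝒦 ⊆ V × V`: pairs `(lam, mu)` of dominant weights such that
`lam - mu` is a nonnegative rational combination of the simple roots. -/
def Kostka {V : Type*} [AddCommGroup V] [Module ℚ V] {r : ℕ}
    (b : Fin r → V) (coroot : Fin r → Module.Dual ℚ V) : Set (V × V) :=
  {p | (∀ i, 0 ≤ coroot i p.1) ∧ (∀ i, 0 ≤ coroot i p.2) ∧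
    ∃ c : Fin r → ℚ, (∀ i, 0 ≤ c i) ∧ p.1 - p.2 = ∑ i, c i • b i}

/-- A nonzero pair `(lam, mu) ∈ 𝒦` spans an extremal ray of the Kostka
cone `𝒦` if and only if there exist an index `j`, a positive rational `c`, and an extreme
point `μ₀` of the intersection polytope `IP_{ϖ_j}`, such that `lam = c•ϖ_j` and
`mu = c•μ₀`. -/
theorem stmt_10 {V : Type*} [AddCommGroup V] [Module ℚ V] {r : ℕ}
    (b : Module.Basis (Fin r) ℚ V) (coroot : Fin r → Module.Dual ℚ V)
    (hdiag : ∀ i, coroot i (b i) = 2)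
    (hoff : ∀ i j : Fin r, i ≠ j → coroot j (b i) ≤ 0)
    (hint : ∀ i j : Fin r, ∃ n : ℤ, coroot j (b i) = (n : ℚ))
    (Φ : Set V) (hΦfin : Φ.Finite) (hΦroot : ∀ i, b i ∈ Φ)
    (hΦrefl : ∀ β ∈ Φ, ∀ i, β - coroot i β • b i ∈ Φ)
    (ϖ : Fin r → V)
    (hϖ : ∀ i j : Fin r, coroot j (ϖ i) = if i = j then 1 else 0)
    (lam mu : V)
    (hK : (lam, mu) ∈ Kostka (⇑b) coroot)
    (hne : (lam, mu) ≠ (0 : V × V)) :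
    (∀ p q : V × V, p ∈ Kostka (⇑b) coroot → q ∈ Kostka (⇑b) coroot →
      p + q = (lam, mu) →
        (∃ c : ℚ, 0 ≤ c ∧ p = c • (lam, mu)) ∧
        (∃ c : ℚ, 0 ≤ c ∧ q = c • (lam, mu)))
    ↔ ∃ (j : Fin r) (c : ℚ) (μ₀ : V), 0 < c ∧
        μ₀ ∈ (IP (⇑b) coroot (ϖ j)).extremePoints ℚ ∧
        lam = c • ϖ j ∧ mu = c • μ₀ := by
  classical
  obtain ⟨B, hBpd, hBsymm, hBid⟩ := exists_goodForm b coroot hdiag Φ hΦfin hΦroot hΦrefl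
  have hBposdiag : ∀ i, 0 < B (b i) (b i) := fun i => hBpd (b i) (b.ne_zero i)
  -- separation by coroots
  have hsep : ∀ v : V, (∀ i, coroot i v = 0) → v = 0 := by
    intro v hv
    by_contra h0
    have h1 : 0 < B v v := hBpd v h0
    have hcol : ∀ i, B v (b i) = 0 := by
      intro i
      have h3 := hBid i v
      rw [hv i, zero_mul] at h3
      linarith
    have h2 : B v v = 0 := by
      have he : (B v) v = (B v) (∑ i, b.repr v i • b i) := congrArg (B v) (b.sum_repr v).symm
      rw [he, map_sum]
      apply Finset.sum_eq_zero
      intro i _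
      rw [map_smul, hcol i, smul_zero]
    linarith
  -- L1 : dominant plus antidominant cone implies zero
  have hL1 : ∀ (m : V) (e : Fin r → ℚ), (∀ i, 0 ≤ coroot i m) → (∀ i, 0 ≤ e i) →
      -m = ∑ i, e i • b i → m = 0 := by
    intro m e hdom he hsum
    by_contra h0
    have h1 : 0 < B m m := hBpd m h0
    have hexp : -(B m m) = ∑ i, e i * B m (b i) := by
      have h2 : (B m) (-m) = (B m) (∑ i, e i • b i) := congrArg (B m) hsum
      rw [map_neg, map_sum] at h2
      simpa [smul_eq_mul] using h2
    have h3 : 0 ≤ ∑ i, e i * (2 * B m (b i)) := by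
      apply Finset.sum_nonneg
      intro i _
      rw [← hBid i m]
      exact mul_nonneg (he i) (mul_nonneg (hdom i) (hBposdiag i).le)
    have h4 : ∑ i, e i * (2 * B m (b i)) = 2 * -(B m m) := by
      rw [hexp, Finset.mul_sum]
      apply Finset.sum_congr rfl
      intro i _
      ring
    rw [h4] at h3
    linarith
  -- representation in fundamental weights
  have hrep : ∀ v : V, v = ∑ k, coroot k v • ϖ k := by
    intro v
    have hz : ∀ i, coroot i (v - ∑ k, coroot k v • ϖ k) = 0 := by
      intro i
      rw [map_sub, map_sum]
      have : ∀ k, coroot i (coroot k v • ϖ k) = if k = i then coroot k v else 0 := by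
        intro k
        rw [map_smul, hϖ k i, smul_eq_mul]
        split_ifs <;> ring
      rw [Finset.sum_congr rfl fun k _ => this k, Finset.sum_ite_eq' Finset.univ i
        (fun k => coroot k v)]
      simp
    have := hsep _ hz
    rw [sub_eq_zero] at this
    exact this
  -- Kostka cone is closed under nonnegative scaling
  have hKscale : ∀ (t : ℚ), 0 ≤ t → ∀ p : V × V, p ∈ Kostka (⇑b) coroot →
      t • p ∈ Kostka (⇑b) coroot := by
    intro t ht p hp
    obtain ⟨h1, h2, e, he, hsum⟩ := hp
    refine ⟨fun i => ?_, fun i => ?_, fun i => t * e i, fun i => mul_nonneg ht (he i), ?_⟩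
    · rw [Prod.smul_fst, map_smul, smul_eq_mul]
      exact mul_nonneg ht (h1 i)
    · rw [Prod.smul_snd, map_smul, smul_eq_mul]
      exact mul_nonneg ht (h2 i)
    · rw [Prod.smul_fst, Prod.smul_snd, ← smul_sub, hsum, Finset.smul_sum]
      apply Finset.sum_congr rfl
      intro i _
      rw [smul_smul]
  -- IP to Kostka
  have hIPtoK : ∀ (j : Fin r) (ν : V), ν ∈ IP (⇑b) coroot (ϖ j) →
      (ϖ j, ν) ∈ Kostka (⇑b) coroot := by
    intro j ν hν
    obtain ⟨hν1, e, he, hsum⟩ := hν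
    refine ⟨fun i => ?_, hν1, e, he, hsum⟩
    rw [hϖ j i]
    split_ifs <;> norm_num
  -- Kostka to IP
  have hKtoIP : ∀ (j : Fin r) (t : ℚ), 0 < t → ∀ (m : V),
      (t • ϖ j, m) ∈ Kostka (⇑b) coroot → t⁻¹ • m ∈ IP (⇑b) coroot (ϖ j) := by
    intro j t ht m hm
    obtain ⟨h1, h2, e, he, hsum⟩ := hm
    refine ⟨fun i => ?_, fun i => t⁻¹ * e i,
      fun i => mul_nonneg (inv_nonneg.mpr ht.le) (he i), ?_⟩
    · rw [map_smul, smul_eq_mul]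
      exact mul_nonneg (inv_nonneg.mpr ht.le) (h2 i)
    · have heq : ϖ j - t⁻¹ • m = t⁻¹ • (t • ϖ j - m) := by
        rw [smul_sub, smul_smul, inv_mul_cancel₀ ht.ne', one_smul]
      rw [heq, hsum, Finset.smul_sum]
      apply Finset.sum_congr rfl
      intro i _
      rw [smul_smul]
  -- Cartan matrix
  set N : Matrix (Fin r) (Fin r) ℚ := Matrix.of fun j i => coroot j (b i) with hN
  have hNent : ∀ j i, N j i = coroot j (b i) := fun j i => rfl
  have hNmv : ∀ (u : Fin r → ℚ) (j : Fin r), N.mulVec u j = coroot j (∑ i, u i • b i) := by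
    intro u j
    rw [map_sum]
    simp only [Matrix.mulVec, dotProduct, hNent, map_smul, smul_eq_mul]
    apply Finset.sum_congr rfl
    intro i _
    ring
  have hPDN : ∀ u : Fin r → ℚ, (∀ j, u j = 0 ∨ N.mulVec u j = 0) → u = 0 := by
    intro u hu
    have hvz : (∑ i, u i • b i) = 0 := by
      by_contra h0
      set v := ∑ i, u i • b i with hv
      have h1 : 0 < B v v := hBpd v h0
      have h2 : B v v = ∑ j, u j * B v (b j) := by
        have he : (B v) v = (B v) (∑ j, u j • b j) := congrArg (B v) rfl
        rw [he, map_sum]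
        apply Finset.sum_congr rfl
        intro j _
        rw [map_smul, smul_eq_mul]
      have h3 : ∀ j, u j * (2 * B v (b j)) = 0 := by
        intro j
        rcases hu j with h | h
        · rw [h, zero_mul]
        · rw [hNmv] at h
          rw [← hv] at h
          rw [← hBid j v, h, zero_mul, mul_zero]
      have h4 : 2 * B v v = 0 := by
        rw [h2, Finset.mul_sum]
        apply Finset.sum_eq_zero
        intro j _
        rw [← h3 j]
        ring
      linarith
    funext i
    exact Fintype.linearIndependent_iff.mp b.linearIndependent u hvz i
  -- decomposition lemma
  have hD : ∀ (l1 l2 m : V) (cc : Fin r → ℚ), (∀ i, 0 ≤ coroot i l1) →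
      (∀ i, 0 ≤ coroot i l2) → (∀ i, 0 ≤ coroot i m) → (∀ i, 0 ≤ cc i) →
      l1 + l2 - m = ∑ i, cc i • b i →
      ∃ m1 m2 : V, m = m1 + m2 ∧ (l1, m1) ∈ Kostka (⇑b) coroot ∧
        (l2, m2) ∈ Kostka (⇑b) coroot := by
    intro l1 l2 m cc h1 h2 hm hcc hsum
    have hcxy : ∀ j, N.mulVec cc j ≤ coroot j l1 + coroot j l2 := by
      intro j
      rw [hNmv, ← hsum, map_sub, map_add]
      have := hm j
      linarith
    obtain ⟨d, hd0, hdc, hdx, hdy⟩ := matrix_split N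
      (fun j => hdiag j) (fun i j hij => hoff i j hij) hPDN
      (fun j => coroot j l1) (fun j => coroot j l2) cc h1 h2 hcc hcxy
    set m1 := l1 - ∑ i, d i • b i with hm1
    set m2 := l2 - ∑ i, (cc i - d i) • b i with hm2
    have hsplit : (∑ i, cc i • b i) = (∑ i, d i • b i) + ∑ i, (cc i - d i) • b i := by
      rw [← Finset.sum_add_distrib]
      apply Finset.sum_congr rfl
      intro i _
      rw [← add_smul]
      ring_nf
    have hmeq : m = m1 + m2 := by
      have : m = l1 + l2 - ∑ i, cc i • b i := by
        rw [← hsum]; abel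
      rw [this, hsplit, hm1, hm2]
      abel
    refine ⟨m1, m2, hmeq, ⟨h1, fun j => ?_, d, hd0, by rw [hm1, sub_sub_cancel]⟩,
      ⟨h2, fun j => ?_, fun i => cc i - d i,
        fun i => by show 0 ≤ cc i - d i; linarith [hdc i],
        by show l2 - m2 = ∑ i, (cc i - d i) • b i; rw [hm2, sub_sub_cancel]⟩⟩
    · rw [hm1, map_sub, ← hNmv]
      linarith [hdx j]
    · rw [hm2, map_sub]
      have : coroot j (∑ i, (cc i - d i) • b i) = N.mulVec (cc - d) j := by
        rw [hNmv]
        rfl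
      rw [this]
      linarith [hdy j]
  obtain ⟨hdl, hdm, cc, hcc, hsumK⟩ := hK
  constructor
  · -- forward direction
    intro hext
    have hlam0 : lam ≠ 0 := by
      intro h0
      apply hne
      have hmu0 : mu = 0 := by
        apply hL1 mu cc hdm hcc
        rw [← hsumK, h0]
        abel
      rw [h0, hmu0]
      rfl
    obtain ⟨j, hj⟩ : ∃ j, coroot j lam ≠ 0 := by
      by_contra h
      push_neg at h
      exact hlam0 (hsep lam h)
    have haj : 0 < coroot j lam := lt_of_le_of_ne (hdl j) (Ne.symm hj)
    have hothers : ∀ k, k ≠ j → coroot k lam = 0 := by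
      intro k hk
      by_contra hak
      have hak' : 0 < coroot k lam := lt_of_le_of_ne (hdl k) (Ne.symm hak)
      set l1 := coroot j lam • ϖ j with hl1
      set l2 := lam - l1 with hl2
      have hd1 : ∀ i, 0 ≤ coroot i l1 := by
        intro i
        rw [hl1, map_smul, hϖ j i, smul_eq_mul]
        split_ifs <;> [linarith; simp]
      have hc1 : ∀ i, coroot i l1 = if j = i then coroot j lam else 0 := by
        intro i
        rw [hl1, map_smul, hϖ j i, smul_eq_mul]
        split_ifs <;> ring
      have hd2 : ∀ i, 0 ≤ coroot i l2 := by
        intro i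
        rw [hl2, map_sub, hc1 i]
        split_ifs with hji
        · rw [← hji]
          linarith
        · simpa using hdl i
      have hsum2 : l1 + l2 - mu = ∑ i, cc i • b i := by
        rw [hl2, ← hsumK]
        abel
      obtain ⟨m1, m2, hm12, hK1, hK2⟩ := hD l1 l2 mu cc hd1 hd2 hdm hcc hsum2
      have hpq : (l1, m1) + (l2, m2) = (lam, mu) := by
        rw [Prod.mk_add_mk]
        refine Prod.ext ?_ ?_
        · show l1 + l2 = lam
          rw [hl2]
          abel
        · exact hm12.symm
      obtain ⟨⟨t, ht0, hteq⟩, -⟩ := hext (l1, m1) (l2, m2) hK1 hK2 hpq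
      have h1 : l1 = t • lam := congrArg Prod.fst hteq
      have h2 : coroot k l1 = t * coroot k lam := by
        rw [h1, map_smul, smul_eq_mul]
      rw [hc1 k] at h2
      rw [if_neg (Ne.symm hk)] at h2
      have ht : t = 0 := by
        rcases mul_eq_zero.mp h2.symm with h | h
        · exact h
        · exact absurd h hak
      have h3 : coroot j l1 = t * coroot j lam := by
        rw [h1, map_smul, smul_eq_mul]
      rw [hc1 j, if_pos rfl, ht, zero_mul] at h3
      exact hj h3
    have hlameq : lam = coroot j lam • ϖ j := by
      conv_lhs => rw [hrep lam]
      rw [Finset.sum_eq_single j]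
      · intro k _ hk
        rw [hothers k hk, zero_smul]
      · intro h
        exact absurd (Finset.mem_univ j) h
    have hμ₀IP : (coroot j lam)⁻¹ • mu ∈ IP (⇑b) coroot (ϖ j) := by
      apply hKtoIP j (coroot j lam) haj mu
      rw [← hlameq]
      exact ⟨hdl, hdm, cc, hcc, hsumK⟩
    refine ⟨j, coroot j lam, (coroot j lam)⁻¹ • mu, haj, mem_extremePoints.mpr ⟨hμ₀IP, ?_⟩, hlameq, ?_⟩
    · intro ν1 hν1 ν2 hν2 hseg
      obtain ⟨a, a', ha, ha', haa, haeq⟩ := hseg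
      have hpmem : (a * coroot j lam) • (ϖ j, ν1) ∈ Kostka (⇑b) coroot :=
        hKscale _ (by positivity) _ (hIPtoK j ν1 hν1)
      have hqmem : (a' * coroot j lam) • (ϖ j, ν2) ∈ Kostka (⇑b) coroot :=
        hKscale _ (by positivity) _ (hIPtoK j ν2 hν2)
      have hsum3 : (a * coroot j lam) • ((ϖ j, ν1) : V × V) +
          (a' * coroot j lam) • ((ϖ j, ν2) : V × V) = (lam, mu) := by
        rw [Prod.smul_mk, Prod.smul_mk, Prod.mk_add_mk]
        refine Prod.ext ?_ ?_
        · show (a * coroot j lam) • ϖ j + (a' * coroot j lam) • ϖ j = lam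
          rw [← add_smul]
          have : a * coroot j lam + a' * coroot j lam = coroot j lam := by
            rw [← add_mul, haa, one_mul]
          rw [this, ← hlameq]
        · show (a * coroot j lam) • ν1 + (a' * coroot j lam) • ν2 = mu
          have : (a * coroot j lam) • ν1 + (a' * coroot j lam) • ν2 =
              coroot j lam • (a • ν1 + a' • ν2) := by
            rw [smul_add, smul_smul, smul_smul]
            ring_nf
          rw [this, haeq, smul_smul, mul_inv_cancel₀ haj.ne', one_smul]
      obtain ⟨⟨s, hs0, hseq⟩, ⟨s', hs0', hseq'⟩⟩ :=
        hext _ _ hpmem hqmem hsum3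
      constructor
      · -- ν1 = μ₀
        have hf : (a * coroot j lam) • ϖ j = s • lam := congrArg Prod.fst hseq
        have hsnd : (a * coroot j lam) • ν1 = s • mu := congrArg Prod.snd hseq
        have hfc : a * coroot j lam = s * coroot j lam := by
          have := congrArg (coroot j) hf
          rwa [map_smul, map_smul, hϖ j j, if_pos rfl, smul_eq_mul, smul_eq_mul,
            mul_one] at this
        have hsa : s = a := (mul_right_cancel₀ hj hfc).symm
        rw [hsa] at hsnd
        apply smul_right_injective V (show (a * coroot j lam) ≠ 0 by positivity)
        show (a * coroot j lam) • ν1 = (a * coroot j lam) • ((coroot j lam)⁻¹ • mu)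
        rw [hsnd, smul_smul, mul_assoc, mul_inv_cancel₀ haj.ne', mul_one]
      · -- ν2 = μ₀
        have hf : (a' * coroot j lam) • ϖ j = s' • lam := congrArg Prod.fst hseq'
        have hsnd : (a' * coroot j lam) • ν2 = s' • mu := congrArg Prod.snd hseq'
        have hfc : a' * coroot j lam = s' * coroot j lam := by
          have := congrArg (coroot j) hf
          rwa [map_smul, map_smul, hϖ j j, if_pos rfl, smul_eq_mul, smul_eq_mul,
            mul_one] at this
        have hsa : s' = a' := (mul_right_cancel₀ hj hfc).symm
        rw [hsa] at hsnd
        apply smul_right_injective V (show (a' * coroot j lam) ≠ 0 by positivity)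
        show (a' * coroot j lam) • ν2 = (a' * coroot j lam) • ((coroot j lam)⁻¹ • mu)
        rw [hsnd, smul_smul, mul_assoc, mul_inv_cancel₀ haj.ne', mul_one]
    · rw [smul_smul, mul_inv_cancel₀ haj.ne', one_smul]
  · rintro ⟨j, cj, μ₀, hcj, hμ₀ext, hlameq, hmueq⟩
    obtain ⟨hμ₀IP, hμ₀ex⟩ := mem_extremePoints.mp hμ₀ext
    intro p q hp hq hpq
    obtain ⟨hp1, hp2, e1, he1, hsump⟩ := hp
    obtain ⟨hq1, hq2, e2, he2, hsumq⟩ := hq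
    have hadd1 : p.1 + q.1 = lam := congrArg Prod.fst hpq
    have hadd2 : p.2 + q.2 = mu := congrArg Prod.snd hpq
    have hclam : ∀ k, coroot k lam = if j = k then cj else 0 := by
      intro k
      rw [hlameq, map_smul, hϖ j k, smul_eq_mul]
      split_ifs <;> ring
    have hcoordp : ∀ k, k ≠ j → coroot k p.1 = 0 := by
      intro k hk
      have h1 : coroot k p.1 + coroot k q.1 = 0 := by
        rw [← map_add, hadd1, hclam k, if_neg (Ne.symm hk)]
      have := hp1 k
      have := hq1 k
      linarith
    have hcoordq : ∀ k, k ≠ j → coroot k q.1 = 0 := by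
      intro k hk
      have h1 : coroot k p.1 + coroot k q.1 = 0 := by
        rw [← map_add, hadd1, hclam k, if_neg (Ne.symm hk)]
      have := hp1 k
      have := hq1 k
      linarith
    set t := coroot j p.1 with htdef
    have ht0 : 0 ≤ t := hp1 j
    have htsum : t + coroot j q.1 = cj := by
      rw [htdef, ← map_add, hadd1, hclam j, if_pos rfl]
    have htc : t ≤ cj := by
      have := hq1 j
      linarith
    have hp1eq : p.1 = t • ϖ j := by
      conv_lhs => rw [hrep p.1]
      rw [Finset.sum_eq_single j]
      · intro k _ hk
        rw [hcoordp k hk, zero_smul]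
      · intro h
        exact absurd (Finset.mem_univ j) h
    have hq1eq : q.1 = (cj - t) • ϖ j := by
      conv_lhs => rw [hrep q.1]
      rw [Finset.sum_eq_single j]
      · congr 1
        linarith
      · intro k _ hk
        rw [hcoordq k hk, zero_smul]
      · intro h
        exact absurd (Finset.mem_univ j) h
    rcases eq_or_lt_of_le ht0 with h0 | hpos
    · -- t = 0 : p = 0
      have hp10 : p.1 = 0 := by
        rw [hp1eq, ← h0, zero_smul]
      have hp20 : p.2 = 0 := by
        apply hL1 p.2 e1 hp2 he1
        rw [← hsump, hp10]
        abel
      have hpz : p = 0 := by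
        rw [← Prod.mk.eta (p := p), hp10, hp20]
        rfl
      have hqz : q = (lam, mu) := by
        rw [← hpq, hpz, zero_add]
      constructor
      · exact ⟨0, le_refl 0, by rw [hpz, zero_smul]⟩
      · exact ⟨1, by norm_num, by rw [hqz, one_smul]⟩
    rcases eq_or_lt_of_le htc with hc0 | hcpos
    · -- t = cj : q = 0
      have hq10 : q.1 = 0 := by
        rw [hq1eq, hc0, sub_self, zero_smul]
      have hq20 : q.2 = 0 := by
        apply hL1 q.2 e2 hq2 he2
        rw [← hsumq, hq10]
        abel
      have hqz : q = 0 := by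
        rw [← Prod.mk.eta (p := q), hq10, hq20]
        rfl
      have hpz : p = (lam, mu) := by
        rw [← hpq, hqz, add_zero]
      constructor
      · exact ⟨1, by norm_num, by rw [hpz, one_smul]⟩
      · exact ⟨0, le_refl 0, by rw [hqz, zero_smul]⟩
    · -- 0 < t < cj
      set ν1 := t⁻¹ • p.2 with hν1def
      set ν2 := (cj - t)⁻¹ • q.2 with hν2def
      have hν1IP : ν1 ∈ IP (⇑b) coroot (ϖ j) := by
        apply hKtoIP j t hpos p.2
        rw [← hp1eq, Prod.mk.eta]
        exact ⟨hp1, hp2, e1, he1, hsump⟩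
      have hν2IP : ν2 ∈ IP (⇑b) coroot (ϖ j) := by
        apply hKtoIP j (cj - t) (by linarith) q.2
        rw [← hq1eq, Prod.mk.eta]
        exact ⟨hq1, hq2, e2, he2, hsumq⟩
      have hμ₀eq : μ₀ = cj⁻¹ • mu := by
        rw [hmueq, smul_smul, inv_mul_cancel₀ hcj.ne', one_smul]
      have hseg : μ₀ ∈ openSegment ℚ ν1 ν2 := by
        have hcne : cj ≠ 0 := hcj.ne'
        have htne : t ≠ 0 := hpos.ne'
        have hctne : cj - t ≠ 0 := by linarith
        refine ⟨t / cj, (cj - t) / cj, div_pos hpos hcj, div_pos (by linarith) hcj, ?_, ?_⟩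
        · field_simp; ring
        · rw [hν1def, hν2def, smul_smul, smul_smul,
            show t / cj * t⁻¹ = cj⁻¹ by field_simp,
            show (cj - t) / cj * (cj - t)⁻¹ = cj⁻¹ by field_simp,
            ← smul_add, hadd2]
          exact hμ₀eq.symm
      obtain ⟨hν1eq, hν2eq⟩ := hμ₀ex _ hν1IP _ hν2IP hseg
      constructor
      · refine ⟨t / cj, (div_pos hpos hcj).le, ?_⟩
        rw [← Prod.mk.eta (p := p), Prod.smul_mk]
        refine Prod.ext ?_ ?_
        · show p.1 = (t / cj) • lam
          rw [hp1eq, hlameq, smul_smul, div_mul_cancel₀ _ hcj.ne']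
        · show p.2 = (t / cj) • mu
          rw [hmueq, ← hν1eq, hν1def, smul_smul, smul_smul,
            div_mul_cancel₀ _ hcj.ne', mul_inv_cancel₀ hpos.ne', one_smul]
      · refine ⟨(cj - t) / cj, (div_pos (by linarith) hcj).le, ?_⟩
        rw [← Prod.mk.eta (p := q), Prod.smul_mk]
        refine Prod.ext ?_ ?_
        · show q.1 = ((cj - t) / cj) • lam
          rw [hq1eq, hlameq, smul_smul, div_mul_cancel₀ _ hcj.ne']
        · show q.2 = ((cj - t) / cj) • mu
          rw [hmueq, ← hν2eq, hν2def, smul_smul, smul_smul,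
            div_mul_cancel₀ _ hcj.ne', mul_inv_cancel₀ (by linarith : cj - t ≠ 0), one_smul]
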